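/- For every H ∈ (3/4, 1), setting γ := 2 − 2H, the double integral ∫_0^∞ x^{γ−1} ( ∫_0^x y^{γ−1} min(1, (x−y)^{−2}) dy ) dx is finite. -/
import Mathlib

open MeasureTheory Set Real

-- L1
lemma aux_lintegral_rpow_Ioo {r c : ℝ} (hr : -1 < r) (hc : 0 < c) :
    ∫⁻ y in Set.Ioo (0:ℝ) c, ENNReal.ofReal (y ^ r) = ENNReal.ofReal (c ^ (r+1) / (r+1)) := by
  have hint : IntegrableOn (fun y : ℝ => y ^ r) (Set.Ioo 0 c) :=
    (intervalIntegral.integrableOn_Ioo_rpow_iff hc).mpr hr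
  rw [← ofReal_integral_eq_lintegral_ofReal hint ?_]
  · congr 1
    rw [← MeasureTheory.integral_Ioc_eq_integral_Ioo, ← intervalIntegral.integral_of_le hc.le,
      integral_rpow (Or.inl hr), Real.zero_rpow (by linarith), sub_zero]
  · filter_upwards [ae_restrict_mem measurableSet_Ioo] with y hy
    exact Real.rpow_nonneg hy.1.le r

-- L2
lemma aux_lintegral_min_le (x : ℝ) (s : Set ℝ) :
    ∫⁻ y in s, ENNReal.ofReal (min 1 ((x - y) ^ (-(2:ℝ)))) ≤ ENNReal.ofReal (2 * π) := by
  have hb : ∀ y : ℝ, min 1 ((x - y) ^ (-(2:ℝ))) ≤ 2 * (1 + (x-y)^2)⁻¹ := by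
    intro y
    set t := x - y with ht0
    have ht : t ^ (-(2:ℝ)) = (t^2)⁻¹ := by
      rw [show (-(2:ℝ)) = ((-2 : ℤ) : ℝ) by norm_num, Real.rpow_intCast]
      rw [zpow_neg, zpow_two, sq]
    have h0 : (0:ℝ) < 1 + t^2 := by positivity
    rw [ht]
    rcases le_total (t^2) 1 with h | h
    · calc min 1 (t^2)⁻¹ ≤ 1 := min_le_left _ _
        _ ≤ 2 * (1 + t^2)⁻¹ := by
            rw [← div_eq_mul_inv, le_div_iff₀ h0]; linarith
    · calc min 1 (t^2)⁻¹ ≤ (t^2)⁻¹ := min_le_right _ _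
        _ ≤ 2 * (1 + t^2)⁻¹ := by
            have ht2 : (0:ℝ) < t^2 := by nlinarith
            rw [← div_eq_mul_inv, inv_eq_one_div, div_le_div_iff₀ ht2 h0]; nlinarith
  calc ∫⁻ y in s, ENNReal.ofReal (min 1 ((x - y) ^ (-(2:ℝ))))
      ≤ ∫⁻ y in s, ENNReal.ofReal (2 * (1 + (x-y)^2)⁻¹) :=
        lintegral_mono fun y => ENNReal.ofReal_le_ofReal (hb y)
    _ ≤ ∫⁻ y, ENNReal.ofReal (2 * (1 + (x-y)^2)⁻¹) := setLIntegral_le_lintegral _ _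
    _ = ∫⁻ t, ENNReal.ofReal (2 * (1 + t^2)⁻¹) := by
        exact (Measure.measurePreserving_sub_left volume x).lintegral_comp
          (f := fun t : ℝ => ENNReal.ofReal (2 * (1 + t^2)⁻¹)) (by fun_prop)
    _ = ENNReal.ofReal (2 * π) := by
        rw [← ofReal_integral_eq_lintegral_ofReal (integrable_inv_one_add_sq.const_mul 2)
          (Filter.Eventually.of_forall fun t => by positivity)]
        rw [MeasureTheory.integral_const_mul, integral_univ_inv_one_add_sq]

-- finishing lemma
lemma aux_lint_lt_top {s : Set ℝ} (hs : MeasurableSet s) {f : ℝ → ℝ}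
    (hf : IntegrableOn f s) (h0 : ∀ x ∈ s, 0 ≤ f x) :
    ∫⁻ x in s, ENNReal.ofReal (f x) < ⊤ := by
  rw [← ofReal_integral_eq_lintegral_ofReal hf
    (by filter_upwards [ae_restrict_mem hs] with x hx using h0 x hx)]
  exact ENNReal.ofReal_lt_top

theorem stmt19 (H : ℝ) (hH : H ∈ Set.Ioo (3/4 : ℝ) 1) (γ : ℝ) (hγ : γ = 2 - 2 * H) :
    ∫⁻ x in Set.Ioi (0 : ℝ),
      ENNReal.ofReal (x ^ (γ - 1)) *
        ∫⁻ y in Set.Ioo (0 : ℝ) x,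
          ENNReal.ofReal (y ^ (γ - 1) * min 1 ((x - y) ^ (-(2:ℝ)))) < ⊤ := by
  have hγ0 : 0 < γ := by rw [hγ]; linarith [hH.2]
  have hγhalf : γ < 1/2 := by rw [hγ]; linarith [hH.1]
  set F : ℝ → ENNReal := fun x => ENNReal.ofReal (x ^ (γ - 1)) *
        ∫⁻ y in Set.Ioo (0 : ℝ) x,
          ENNReal.ofReal (y ^ (γ - 1) * min 1 ((x - y) ^ (-(2:ℝ)))) with hF
  show ∫⁻ x in Set.Ioi (0:ℝ), F x < ⊤
  -- Part 1 : on (0,1]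
  have part1 : ∫⁻ x in Set.Ioc (0:ℝ) 1, F x < ⊤ := by
    have hb : ∀ x ∈ Set.Ioc (0:ℝ) 1, F x ≤ ENNReal.ofReal (x ^ (γ-1) * (x ^ γ / γ)) := by
      intro x hx
      have hx0 : (0:ℝ) < x := hx.1
      have hinner : (∫⁻ y in Set.Ioo (0:ℝ) x,
          ENNReal.ofReal (y ^ (γ - 1) * min 1 ((x - y) ^ (-(2:ℝ)))))
          ≤ ENNReal.ofReal (x ^ γ / γ) := by
        calc (∫⁻ y in Set.Ioo (0:ℝ) x,
              ENNReal.ofReal (y ^ (γ - 1) * min 1 ((x - y) ^ (-(2:ℝ)))))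
            ≤ ∫⁻ y in Set.Ioo (0:ℝ) x, ENNReal.ofReal (y ^ (γ-1)) := by
              refine lintegral_mono_ae ?_
              filter_upwards [ae_restrict_mem measurableSet_Ioo] with y hy
              refine ENNReal.ofReal_le_ofReal ?_
              have h2 : 0 ≤ y ^ (γ-1) := Real.rpow_nonneg hy.1.le _
              calc y ^ (γ-1) * min 1 ((x - y) ^ (-(2:ℝ)))
                  ≤ y ^ (γ-1) * 1 := mul_le_mul_of_nonneg_left (min_le_left _ _) h2
                _ = y ^ (γ-1) := mul_one _
          _ = ENNReal.ofReal (x ^ (γ-1+1) / (γ-1+1)) :=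
              aux_lintegral_rpow_Ioo (by linarith) hx0
          _ = ENNReal.ofReal (x ^ γ / γ) := by norm_num
      calc F x ≤ ENNReal.ofReal (x ^ (γ-1)) * ENNReal.ofReal (x ^ γ / γ) :=
            mul_le_mul_right hinner _
        _ = ENNReal.ofReal (x ^ (γ-1) * (x ^ γ / γ)) :=
            (ENNReal.ofReal_mul (Real.rpow_nonneg hx0.le _)).symm
    calc ∫⁻ x in Set.Ioc (0:ℝ) 1, F x
        ≤ ∫⁻ x in Set.Ioc (0:ℝ) 1, ENNReal.ofReal (x ^ (γ-1) * (x ^ γ / γ)) := by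
          refine lintegral_mono_ae ?_
          filter_upwards [ae_restrict_mem measurableSet_Ioc] with x hx using hb x hx
      _ < ⊤ := by
          refine aux_lint_lt_top measurableSet_Ioc ?_ ?_
          · rw [integrableOn_Ioc_iff_integrableOn_Ioo]
            have h1 : IntegrableOn (fun x : ℝ => x ^ (2*γ-1) * (1/γ)) (Set.Ioo 0 1) :=
              ((intervalIntegral.integrableOn_Ioo_rpow_iff one_pos).mpr (by linarith)).mul_const _
            refine h1.congr_fun ?_ measurableSet_Ioo
            intro x hx
            have hxx : x ^ (γ-1) * x ^ γ = x ^ (2*γ-1) := by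
              rw [← Real.rpow_add hx.1]; congr 1; ring
            dsimp only
            rw [mul_one_div, ← hxx, mul_div_assoc]
          · intro x hx
            exact mul_nonneg (Real.rpow_nonneg hx.1.le _)
              (div_nonneg (Real.rpow_nonneg hx.1.le _) hγ0.le)
  -- Part 2 : on (1, ∞)
  have part2 : ∫⁻ x in Set.Ioi (1:ℝ), F x < ⊤ := by
    have hb : ∀ x ∈ Set.Ioi (1:ℝ),
        F x ≤ ENNReal.ofReal (x ^ (γ-1) * ((x/2) ^ (γ-2) / γ + (x/2) ^ (γ-1) * (2*π))) := by
      intro x hx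
      have hx1 : (1:ℝ) < x := hx
      have hx0 : (0:ℝ) < x := by linarith
      have hx2 : (0:ℝ) < x/2 := by linarith
      have hB1 : (∫⁻ y in Set.Ioo (0:ℝ) (x/2),
          ENNReal.ofReal (y ^ (γ - 1) * min 1 ((x - y) ^ (-(2:ℝ)))))
          ≤ ENNReal.ofReal ((x/2) ^ (γ-2) / γ) := by
        calc (∫⁻ y in Set.Ioo (0:ℝ) (x/2),
              ENNReal.ofReal (y ^ (γ - 1) * min 1 ((x - y) ^ (-(2:ℝ)))))
            ≤ ∫⁻ y in Set.Ioo (0:ℝ) (x/2),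
              ENNReal.ofReal (y ^ (γ-1)) * ENNReal.ofReal ((x/2) ^ (-(2:ℝ))) := by
              refine lintegral_mono_ae ?_
              filter_upwards [ae_restrict_mem measurableSet_Ioo] with y hy
              rw [← ENNReal.ofReal_mul (Real.rpow_nonneg hy.1.le _)]
              refine ENNReal.ofReal_le_ofReal ?_
              refine mul_le_mul_of_nonneg_left ?_ (Real.rpow_nonneg hy.1.le _)
              refine le_trans (min_le_right _ _) ?_
              exact Real.rpow_le_rpow_of_nonpos hx2 (by linarith [hy.2]) (by norm_num)
          _ = (∫⁻ y in Set.Ioo (0:ℝ) (x/2), ENNReal.ofReal (y ^ (γ-1)))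
                * ENNReal.ofReal ((x/2) ^ (-(2:ℝ))) := lintegral_mul_const _ (by fun_prop)
          _ = ENNReal.ofReal ((x/2) ^ (γ-1+1) / (γ-1+1)) * ENNReal.ofReal ((x/2) ^ (-(2:ℝ))) := by
              rw [aux_lintegral_rpow_Ioo (by linarith) hx2]
          _ = ENNReal.ofReal ((x/2) ^ (γ-2) / γ) := by
              rw [← ENNReal.ofReal_mul (div_nonneg (Real.rpow_nonneg hx2.le _) (by linarith))]
              congr 1
              rw [div_mul_eq_mul_div, ← Real.rpow_add hx2]
              norm_num
              ring_nf
      have hB2 : (∫⁻ y in Set.Ico (x/2) x,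
          ENNReal.ofReal (y ^ (γ - 1) * min 1 ((x - y) ^ (-(2:ℝ)))))
          ≤ ENNReal.ofReal ((x/2) ^ (γ-1) * (2*π)) := by
        calc (∫⁻ y in Set.Ico (x/2) x,
              ENNReal.ofReal (y ^ (γ - 1) * min 1 ((x - y) ^ (-(2:ℝ)))))
            ≤ ∫⁻ y in Set.Ico (x/2) x,
              ENNReal.ofReal ((x/2) ^ (γ-1)) * ENNReal.ofReal (min 1 ((x - y) ^ (-(2:ℝ)))) := by
              refine lintegral_mono_ae ?_
              filter_upwards [ae_restrict_mem measurableSet_Ico] with y hy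
              rw [← ENNReal.ofReal_mul (Real.rpow_nonneg hx2.le _)]
              refine ENNReal.ofReal_le_ofReal ?_
              have hmin0 : 0 ≤ min 1 ((x - y) ^ (-(2:ℝ))) :=
                le_min zero_le_one (Real.rpow_nonneg (by linarith [hy.2]) _)
              refine mul_le_mul_of_nonneg_right ?_ hmin0
              exact Real.rpow_le_rpow_of_nonpos hx2 hy.1 (by linarith)
          _ = ENNReal.ofReal ((x/2) ^ (γ-1)) *
                ∫⁻ y in Set.Ico (x/2) x, ENNReal.ofReal (min 1 ((x - y) ^ (-(2:ℝ)))) :=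
              lintegral_const_mul' _ _ ENNReal.ofReal_ne_top
          _ ≤ ENNReal.ofReal ((x/2) ^ (γ-1)) * ENNReal.ofReal (2*π) :=
              mul_le_mul_right (aux_lintegral_min_le x _) _
          _ = ENNReal.ofReal ((x/2) ^ (γ-1) * (2*π)) :=
              (ENNReal.ofReal_mul (Real.rpow_nonneg hx2.le _)).symm
      have hI : (∫⁻ y in Set.Ioo (0:ℝ) x,
          ENNReal.ofReal (y ^ (γ - 1) * min 1 ((x - y) ^ (-(2:ℝ)))))
          ≤ ENNReal.ofReal ((x/2) ^ (γ-2) / γ) + ENNReal.ofReal ((x/2) ^ (γ-1) * (2*π)) := by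
        have hsub : Set.Ioo (0:ℝ) x ⊆ Set.Ioo 0 (x/2) ∪ Set.Ico (x/2) x := by
          intro y hy
          rcases lt_or_ge y (x/2) with h | h
          · exact Or.inl ⟨hy.1, h⟩
          · exact Or.inr ⟨h, hy.2⟩
        calc (∫⁻ y in Set.Ioo (0:ℝ) x,
              ENNReal.ofReal (y ^ (γ - 1) * min 1 ((x - y) ^ (-(2:ℝ)))))
            ≤ ∫⁻ y in Set.Ioo (0:ℝ) (x/2) ∪ Set.Ico (x/2) x,
              ENNReal.ofReal (y ^ (γ - 1) * min 1 ((x - y) ^ (-(2:ℝ)))) :=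
              lintegral_mono_set hsub
          _ ≤ (∫⁻ y in Set.Ioo (0:ℝ) (x/2),
                ENNReal.ofReal (y ^ (γ - 1) * min 1 ((x - y) ^ (-(2:ℝ)))))
              + ∫⁻ y in Set.Ico (x/2) x,
                ENNReal.ofReal (y ^ (γ - 1) * min 1 ((x - y) ^ (-(2:ℝ)))) :=
              lintegral_union_le _ _ _
          _ ≤ _ := add_le_add hB1 hB2
      calc F x ≤ ENNReal.ofReal (x ^ (γ-1)) *
            (ENNReal.ofReal ((x/2) ^ (γ-2) / γ) + ENNReal.ofReal ((x/2) ^ (γ-1) * (2*π))) :=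
            mul_le_mul_right hI _
        _ = ENNReal.ofReal (x ^ (γ-1) * ((x/2) ^ (γ-2) / γ + (x/2) ^ (γ-1) * (2*π))) := by
            rw [← ENNReal.ofReal_add
              (div_nonneg (Real.rpow_nonneg hx2.le _) hγ0.le)
              (mul_nonneg (Real.rpow_nonneg hx2.le _) (by positivity)),
              ← ENNReal.ofReal_mul (Real.rpow_nonneg hx0.le _)]
    calc ∫⁻ x in Set.Ioi (1:ℝ), F x
        ≤ ∫⁻ x in Set.Ioi (1:ℝ),
            ENNReal.ofReal (x ^ (γ-1) * ((x/2) ^ (γ-2) / γ + (x/2) ^ (γ-1) * (2*π))) := by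
          refine lintegral_mono_ae ?_
          filter_upwards [ae_restrict_mem measurableSet_Ioi] with x hx using hb x hx
      _ < ⊤ := by
          refine aux_lint_lt_top measurableSet_Ioi ?_ ?_
          · have h1 : IntegrableOn
                (fun x : ℝ => (2 ^ (2-γ) / γ) * x ^ (2*γ-3) + (2 ^ (1-γ) * (2*π)) * x ^ (2*γ-2))
                (Set.Ioi 1) :=
              ((integrableOn_Ioi_rpow_of_lt (by linarith) one_pos).const_mul _).add
                ((integrableOn_Ioi_rpow_of_lt (by linarith) one_pos).const_mul _)
            refine h1.congr_fun ?_ measurableSet_Ioi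
            intro x hx
            have hx0 : (0:ℝ) < x := lt_trans one_pos hx
            have e1 : (x/2) ^ (γ-2) = x ^ (γ-2) * 2 ^ (2-γ) := by
              rw [show x/2 = x * (2:ℝ)⁻¹ by ring, Real.mul_rpow hx0.le (by norm_num),
                Real.inv_rpow (by norm_num : (0:ℝ) ≤ 2),
                ← Real.rpow_neg (by norm_num : (0:ℝ) ≤ 2), show -(γ-2) = 2-γ by ring]
            have e2 : (x/2) ^ (γ-1) = x ^ (γ-1) * 2 ^ (1-γ) := by
              rw [show x/2 = x * (2:ℝ)⁻¹ by ring, Real.mul_rpow hx0.le (by norm_num),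
                Real.inv_rpow (by norm_num : (0:ℝ) ≤ 2),
                ← Real.rpow_neg (by norm_num : (0:ℝ) ≤ 2), show -(γ-1) = 1-γ by ring]
            have e3 : x ^ (γ-1) * x ^ (γ-2) = x ^ (2*γ-3) := by
              rw [← Real.rpow_add hx0]; congr 1; ring
            have e4 : x ^ (γ-1) * x ^ (γ-1) = x ^ (2*γ-2) := by
              rw [← Real.rpow_add hx0]; congr 1; ring
            dsimp only
            rw [e1, e2, ← e3, ← e4]; ring
          · intro x hx
            have hx0 : (0:ℝ) < x := lt_trans one_pos hx
            exact mul_nonneg (Real.rpow_nonneg hx0.le _)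
              (add_nonneg (div_nonneg (Real.rpow_nonneg (by linarith) _) hγ0.le)
                (mul_nonneg (Real.rpow_nonneg (by linarith) _) (by positivity)))
  calc ∫⁻ x in Set.Ioi (0:ℝ), F x
      ≤ (∫⁻ x in Set.Ioc (0:ℝ) 1, F x) + ∫⁻ x in Set.Ioi (1:ℝ), F x := by
        rw [← Set.Ioc_union_Ioi_eq_Ioi (by norm_num : (0:ℝ) ≤ 1)]
        exact lintegral_union_le _ _ _
    _ < ⊤ := ENNReal.add_lt_top.mpr ⟨part1, part2⟩
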